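/- Let θ₁, θ₂ ∈ (0, π/2) and let h be a bounded holomorphic function on Σ_{θ₁} × Σ_{θ₂} with |h(z₁,z₂)| ≤ C (|z₁|^{s₁}/(1+|z₁|^{2s₁}))(|z₂|^{s₂}/(1+|z₂|^{2s₂})) for some C, s₁, s₂ > 0. Fix ρ ∈ (0,1) and set φ_ρ(z) = (1-ρ)+ρz. Define h̃(z₁,z₂) = h(φ_ρ(z₁), φ_ρ(z₂)) − h(φ_ρ(z₁), 1-ρ)/(1+z₂) − h(1-ρ, φ_ρ(z₂))/(1+z₁) + h(1-ρ, 1-ρ)/((1+z₁)(1+z₂)). Then h̃ ∈ H^∞₀(Σ_{θ₁} × Σ_{θ₂}), i.e., h̃ is bounded holomorphic and admits a bound of the same product decay type. -/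

import Mathlib

open Metric Set

/-- The open sector `Σ_θ = {z ≠ 0 : |Arg z| < θ}`. -/
def Sector (θ : ℝ) : Set ℂ := {z : ℂ | z ≠ 0 ∧ |Complex.arg z| < θ}

lemma tan_abs_eq {x : ℝ} (h : |x| < Real.pi/2) : Real.tan |x| = |Real.tan x| := by
  rcases le_or_gt 0 x with hx | hx
  · rw [abs_of_nonneg hx,
      abs_of_nonneg (Real.tan_nonneg_of_nonneg_of_le_pi_div_two hx
        (le_of_lt (by rwa [abs_of_nonneg hx] at h)))]
  · have h' : -(Real.pi/2) < x := by
      have := (abs_lt.1 h).1; linarith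
    rw [abs_of_neg hx, Real.tan_neg,
      abs_of_neg (Real.tan_neg_of_neg_of_pi_div_two_lt hx h')]

lemma mem_sector_iff {θ : ℝ} (hθ : θ ∈ Set.Ioo 0 (Real.pi/2)) {z : ℂ} :
    z ∈ Sector θ ↔ 0 < z.re ∧ |z.im| < z.re * Real.tan θ := by
  obtain ⟨hθ0, hθ2⟩ := hθ
  constructor
  · rintro ⟨hz0, harg⟩
    have hargpi : |Complex.arg z| < Real.pi/2 := harg.trans hθ2
    have habs : 0 < ‖z‖ := norm_pos_iff.mpr hz0
    have hcosarg := Complex.cos_arg hz0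
    have hcos : 0 < Real.cos (Complex.arg z) := by
      apply Real.cos_pos_of_mem_Ioo
      exact ⟨by linarith [(abs_lt.1 hargpi).1], (abs_lt.1 hargpi).2⟩
    have hre : 0 < z.re := by
      have : z.re = ‖z‖ * Real.cos (Complex.arg z) := by
        rw [hcosarg]; field_simp
      rw [this]; exact mul_pos habs hcos
    refine ⟨hre, ?_⟩
    have h1 : Real.tan |Complex.arg z| < Real.tan θ :=
      Real.tan_lt_tan_of_nonneg_of_lt_pi_div_two (abs_nonneg _) hθ2 harg
    rw [tan_abs_eq hargpi, Complex.tan_arg, abs_div, abs_of_pos hre,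
      div_lt_iff₀ hre] at h1
    linarith
  · rintro ⟨hre, him⟩
    have hz0 : z ≠ 0 := by
      intro h; rw [h] at hre; simp at hre
    have habs : 0 < ‖z‖ := norm_pos_iff.mpr hz0
    have hcos : 0 < Real.cos (Complex.arg z) := by
      rw [Complex.cos_arg hz0]; positivity
    have hargpi : |Complex.arg z| < Real.pi/2 := by
      by_contra hcon
      push_neg at hcon
      have h1 : Real.cos |Complex.arg z| ≤ 0 := by
        apply Real.cos_nonpos_of_pi_div_two_le_of_le hcon
        have := Complex.abs_arg_le_pi z
        linarith [Real.pi_pos]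
      rw [Real.cos_abs] at h1; linarith
    refine ⟨hz0, ?_⟩
    by_contra hcon
    push_neg at hcon
    have h1 : Real.tan θ ≤ Real.tan |Complex.arg z| := by
      rcases hcon.lt_or_eq with hl | he
      · exact le_of_lt (Real.tan_lt_tan_of_nonneg_of_lt_pi_div_two hθ0.le hargpi hl)
      · rw [he]
    rw [tan_abs_eq hargpi, Complex.tan_arg, abs_div, abs_of_pos hre] at h1
    rw [le_div_iff₀ hre] at h1
    nlinarith

lemma sq_le_imp {a b : ℝ} (ha : 0 ≤ a) (hb : 0 ≤ b) (h : a^2 ≤ b^2) : a ≤ b := by nlinarith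

lemma sector_norm_pos {θ : ℝ} {z : ℂ} (hz : z ∈ Sector θ) : 0 < ‖z‖ := by
  simpa [norm_pos_iff] using hz.1

lemma sector_cos_norm_le {θ : ℝ} (hθ : θ ∈ Set.Ioo 0 (Real.pi/2)) {z : ℂ}
    (hz : z ∈ Sector θ) : Real.cos θ * ‖z‖ ≤ z.re := by
  obtain ⟨hre, him⟩ := (mem_sector_iff hθ).1 hz
  have hcos : 0 < Real.cos θ := Real.cos_pos_of_mem_Ioo ⟨by linarith [hθ.1, Real.pi_pos], hθ.2⟩
  have hsin : Real.cos θ * Real.tan θ = Real.sin θ := by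
    rw [Real.tan_eq_sin_div_cos]; field_simp
  have hsq : ‖z‖^2 = z.re^2 + z.im^2 := by
    rw [Complex.sq_norm, Complex.normSq_apply]; ring
  apply sq_le_imp (by positivity) hre.le
  have h1 : z.im^2 ≤ (z.re * Real.tan θ)^2 := by
    nlinarith [sq_abs z.im, him, abs_nonneg z.im]
  have h2 : Real.sin θ ^2 + Real.cos θ^2 = 1 := Real.sin_sq_add_cos_sq θ
  calc (Real.cos θ * ‖z‖)^2 = Real.cos θ^2 * (z.re^2 + z.im^2) := by linear_combination (Real.cos θ)^2 * hsq
    _ ≤ Real.cos θ^2 * z.re^2 + (Real.cos θ * Real.tan θ)^2 * z.re^2 := by nlinarith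
    _ = z.re^2 := by rw [hsin]; nlinarith

lemma sector_affine_mem {θ : ℝ} (hθ : θ ∈ Set.Ioo 0 (Real.pi/2)) {a b : ℝ}
    (ha : 0 < a) (hb : 0 < b) {z : ℂ} (hz : z ∈ Sector θ) :
    ((a : ℝ) : ℂ) + (b : ℂ) * z ∈ Sector θ := by
  obtain ⟨hre, him⟩ := (mem_sector_iff hθ).1 hz
  have ht : 0 < Real.tan θ := Real.tan_pos_of_pos_of_lt_pi_div_two hθ.1 hθ.2
  rw [mem_sector_iff hθ]
  have e1 : (((a:ℝ):ℂ) + (b:ℂ)*z).re = a + b*z.re := by simp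
  have e2 : (((a:ℝ):ℂ) + (b:ℂ)*z).im = b*z.im := by simp
  rw [e1, e2, abs_mul, abs_of_pos hb]
  constructor
  · nlinarith
  · nlinarith [abs_nonneg z.im]

lemma real_mem_sector {θ : ℝ} (hθ : θ ∈ Set.Ioo 0 (Real.pi/2)) {x : ℝ} (hx : 0 < x) :
    ((x : ℝ) : ℂ) ∈ Sector θ := by
  have ht : 0 < Real.tan θ := Real.tan_pos_of_pos_of_lt_pi_div_two hθ.1 hθ.2
  rw [mem_sector_iff hθ]
  simp only [Complex.ofReal_re, Complex.ofReal_im, abs_zero]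
  exact ⟨hx, by positivity⟩

lemma sector_re_pos {θ : ℝ} (hθ : θ ∈ Set.Ioo 0 (Real.pi/2)) {z : ℂ}
    (hz : z ∈ Sector θ) : 0 < z.re :=
  ((mem_sector_iff hθ).1 hz).1

lemma ball_subset_sector {θ : ℝ} (hθ : θ ∈ Set.Ioo 0 (Real.pi/2)) {ρ : ℝ}
    (hρ : ρ ∈ Set.Ioo (0:ℝ) 1) :
    ball (((1-ρ:ℝ) : ℂ)) ((1-ρ) * Real.tan θ / (2 * (1 + Real.tan θ))) ⊆ Sector θ := by
  have ht : 0 < Real.tan θ := Real.tan_pos_of_pos_of_lt_pi_div_two hθ.1 hθ.2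
  have hρ1 : 0 < 1 - ρ := by linarith [hρ.2]
  set δ := (1-ρ) * Real.tan θ / (2 * (1 + Real.tan θ)) with hδdef
  have hδpos : 0 < δ := by positivity
  have hδle : δ * (1 + Real.tan θ) = (1-ρ) * Real.tan θ / 2 := by
    rw [hδdef]; field_simp
  have hδlt : δ < (1-ρ)/2 := by
    rw [hδdef, div_lt_div_iff₀ (by positivity) (by norm_num)]
    nlinarith
  intro u hu
  rw [mem_ball] at hu
  have hre : |u.re - (1-ρ)| < δ := by
    have h1 : |(u - ((1-ρ:ℝ):ℂ)).re| ≤ ‖u - ((1-ρ:ℝ):ℂ)‖ := Complex.abs_re_le_norm _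
    have h2 : (u - ((1-ρ:ℝ):ℂ)).re = u.re - (1-ρ) := by simp
    rw [h2] at h1
    calc |u.re - (1-ρ)| ≤ ‖u - ((1-ρ:ℝ):ℂ)‖ := h1
      _ = dist u ((1-ρ:ℝ):ℂ) := (Complex.dist_eq _ _).symm
      _ < δ := hu
  have him : |u.im| < δ := by
    have h1 : |(u - ((1-ρ:ℝ):ℂ)).im| ≤ ‖u - ((1-ρ:ℝ):ℂ)‖ := Complex.abs_im_le_norm _
    have h2 : (u - ((1-ρ:ℝ):ℂ)).im = u.im := by simp
    rw [h2] at h1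
    calc |u.im| ≤ ‖u - ((1-ρ:ℝ):ℂ)‖ := h1
      _ = dist u ((1-ρ:ℝ):ℂ) := (Complex.dist_eq _ _).symm
      _ < δ := hu
  rw [mem_sector_iff hθ]
  obtain ⟨hre1, hre2⟩ := abs_lt.1 hre
  have hult : (1-ρ) - δ < u.re := by linarith
  constructor
  · linarith
  · calc |u.im| < δ := him
      _ < ((1-ρ) - δ) * Real.tan θ := by nlinarith
      _ ≤ u.re * Real.tan θ := by nlinarith

lemma one_le_norm_one_add {z : ℂ} (hz : 0 ≤ z.re) : 1 ≤ ‖1 + z‖ := by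
  have hsq : ‖1+z‖^2 = (1+z.re)^2 + z.im^2 := by
    rw [Complex.sq_norm, Complex.normSq_apply]
    simp; ring
  nlinarith [norm_nonneg (1+z), sq_nonneg z.im]

lemma norm_le_norm_one_add {z : ℂ} (hz : 0 ≤ z.re) : ‖z‖ ≤ ‖1 + z‖ := by
  apply sq_le_imp (norm_nonneg _) (norm_nonneg _)
  have h1 : ‖z‖^2 = z.re^2 + z.im^2 := by
    rw [Complex.sq_norm, Complex.normSq_apply]; ring
  have h2 : ‖1+z‖^2 = (1+z.re)^2 + z.im^2 := by
    rw [Complex.sq_norm, Complex.normSq_apply]; simp; ring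
  nlinarith

lemma one_add_ne_zero {z : ℂ} (hz : 0 ≤ z.re) : (1 + z) ≠ 0 := by
  intro h
  have := one_le_norm_one_add hz
  rw [h] at this; norm_num at this

lemma rpow_two_mul {r s : ℝ} (hr : 0 < r) : r ^ (2*s) = (r^s)^2 := by
  rw [two_mul, Real.rpow_add hr, sq]

lemma g_le_half {r s : ℝ} (hr : 0 < r) (hs : 0 < s) : r^s/(1+r^(2*s)) ≤ 1/2 := by
  have h1 := rpow_two_mul (s := s) hr
  have h2 : 0 < r ^ s := Real.rpow_pos_of_pos hr s
  rw [div_le_div_iff₀ (by nlinarith) (by norm_num)]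
  nlinarith [sq_nonneg (r^s - 1)]

lemma g_le_inv {r s : ℝ} (hr : 0 < r) (hs : 0 < s) : r^s/(1+r^(2*s)) ≤ r^(-s) := by
  have h1 := rpow_two_mul (s := s) hr
  have h2 : 0 < r ^ s := Real.rpow_pos_of_pos hr s
  have h3 : r^(-s) = (r^s)⁻¹ := Real.rpow_neg hr.le s
  rw [h3, div_le_iff₀ (by nlinarith), inv_mul_eq_div, le_div_iff₀ h2]
  nlinarith

lemma min_rpow_le {r s : ℝ} (hr : 0 < r) (hs : 0 < s) :
    min (r^s) (r^(-s)) ≤ 2 * (r^s/(1+r^(2*s))) := by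
  have h1 := rpow_two_mul (s := s) hr
  have h2 : 0 < r ^ s := Real.rpow_pos_of_pos hr s
  have h3 : r^(-s) = (r^s)⁻¹ := Real.rpow_neg hr.le s
  rcases le_total (r^s) 1 with hx | hx
  · calc min (r^s) (r^(-s)) ≤ r^s := min_le_left _ _
      _ ≤ 2 * (r^s/(1+r^(2*s))) := by
        rw [mul_div_assoc', le_div_iff₀ (by nlinarith)]
        nlinarith
  · calc min (r^s) (r^(-s)) ≤ r^(-s) := min_le_right _ _
      _ ≤ 2 * (r^s/(1+r^(2*s))) := by
        rw [h3, mul_div_assoc', le_div_iff₀ (by nlinarith), inv_mul_eq_div, div_le_iff₀ h2]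
        nlinarith

lemma sqrt_min_rpow {r a : ℝ} (hr : 0 < r) :
    Real.sqrt (min (r^a) (r^(-a))) = min (r^(a/2)) (r^(-(a/2))) := by
  have key : ∀ b : ℝ, Real.sqrt (r^b) = r^(b/2) := by
    intro b
    rw [show r^b = (r^(b/2))^2 by rw [← Real.rpow_natCast (r^(b/2)) 2, ← Real.rpow_mul hr.le]; norm_num,
      Real.sqrt_sq (Real.rpow_nonneg hr.le _)]
  rw [Monotone.map_min (fun x y h => Real.sqrt_le_sqrt h), key, key, neg_div]

lemma geom_mean {X K₁ K₂ m₁ m₂ : ℝ} (hX : 0 ≤ X) (hK₁ : 0 ≤ K₁) (hm₁ : 0 ≤ m₁)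
    (hK₂ : 0 ≤ K₂) (hm₂ : 0 ≤ m₂) (h1 : X ≤ K₁ * m₁) (h2 : X ≤ K₂ * m₂) :
    X ≤ (Real.sqrt K₁ * Real.sqrt m₁) * (Real.sqrt K₂ * Real.sqrt m₂) := by
  have hsq : X^2 ≤ (K₁*m₁) * (K₂*m₂) := by nlinarith
  calc X = Real.sqrt (X^2) := (Real.sqrt_sq hX).symm
    _ ≤ Real.sqrt ((K₁*m₁)*(K₂*m₂)) := Real.sqrt_le_sqrt hsq
    _ = (Real.sqrt K₁ * Real.sqrt m₁) * (Real.sqrt K₂ * Real.sqrt m₂) := by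
      rw [Real.sqrt_mul (by positivity), Real.sqrt_mul hK₁, Real.sqrt_mul hK₂]

lemma key_est (θ : ℝ) (hθ : θ ∈ Set.Ioo 0 (Real.pi/2)) (ρ : ℝ) (hρ : ρ ∈ Set.Ioo (0:ℝ) 1)
    (M D s : ℝ) (hM : 0 ≤ M) (hD : 0 ≤ D) (hs : 0 < s) :
    ∃ K : ℝ, 0 < K ∧ ∀ G : ℂ → ℂ, DifferentiableOn ℂ G (Sector θ) →
      (∀ ζ ∈ Sector θ, ‖G ζ‖ ≤ M) →
      (∀ ζ ∈ Sector θ, ‖G ζ‖ ≤ D * ‖ζ‖ ^ (-s)) →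
      ∀ z ∈ Sector θ,
        ‖G (((1-ρ:ℝ):ℂ) + (ρ:ℂ)*z) - G ((1-ρ:ℝ):ℂ) / (1+z)‖ ≤
          K * min (‖z‖ ^ min s 1) (‖z‖ ^ (-min s 1)) := by
  obtain ⟨hθ0, hθ2⟩ := hθ
  obtain ⟨hρ0, hρ1⟩ := hρ
  have ht : 0 < Real.tan θ := Real.tan_pos_of_pos_of_lt_pi_div_two hθ0 hθ2
  have hcos : 0 < Real.cos θ := Real.cos_pos_of_mem_Ioo ⟨by linarith [Real.pi_pos], hθ2⟩
  have h1ρ : 0 < 1 - ρ := by linarith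
  set δ := (1-ρ) * Real.tan θ / (2 * (1 + Real.tan θ)) with hδdef
  have hδ : 0 < δ := by positivity
  set a := min s 1 with hadef
  have ha0 : 0 < a := lt_min hs one_pos
  have ha1 : a ≤ 1 := min_le_right _ _
  have has : a ≤ s := min_le_left _ _
  refine ⟨D * (ρ * Real.cos θ)^(-s) + M + (2*M+1)*ρ/δ + 2*M*(ρ/δ)^a + 1, by positivity, ?_⟩
  intro G hGd hGM hGD z hz
  have hr : 0 < ‖z‖ := sector_norm_pos hz
  have hzre : 0 < z.re := sector_re_pos ⟨hθ0, hθ2⟩ hz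
  have hw : ((1-ρ:ℝ):ℂ) + (ρ:ℂ)*z ∈ Sector θ := sector_affine_mem ⟨hθ0, hθ2⟩ h1ρ hρ0 hz
  have hcmem : ((1-ρ:ℝ):ℂ) ∈ Sector θ := real_mem_sector ⟨hθ0, hθ2⟩ h1ρ
  set w := ((1-ρ:ℝ):ℂ) + (ρ:ℂ)*z with hwdef
  set c := ((1-ρ:ℝ):ℂ) with hcdef
  have hone : 1 ≤ ‖1 + z‖ := one_le_norm_one_add hzre.le
  rcases le_or_gt 1 ‖z‖ with h1 | h1
  · -- large |z|
    have hmin : min (‖z‖^a) (‖z‖^(-a)) = ‖z‖^(-a) :=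
      min_eq_right (Real.rpow_le_rpow_of_exponent_le h1 (by linarith))
    have hwre : ρ * Real.cos θ * ‖z‖ ≤ w.re := by
      have h2 := sector_cos_norm_le ⟨hθ0, hθ2⟩ hz
      have h3 : w.re = (1-ρ) + ρ * z.re := by rw [hwdef, hcdef]; simp
      nlinarith
    have hwnorm : ρ * Real.cos θ * ‖z‖ ≤ ‖w‖ :=
      hwre.trans (Complex.re_le_norm w)
    have hb1 : ‖G w‖ ≤ D * (ρ * Real.cos θ)^(-s) * ‖z‖^(-a) := by
      calc ‖G w‖ ≤ D * ‖w‖^(-s) := hGD w hw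
        _ ≤ D * ((ρ * Real.cos θ) * ‖z‖)^(-s) := by
          apply mul_le_mul_of_nonneg_left _ hD
          exact Real.rpow_le_rpow_of_nonpos (by positivity) hwnorm (by linarith)
        _ = D * ((ρ * Real.cos θ)^(-s) * ‖z‖^(-s)) := by
          rw [Real.mul_rpow (by positivity) hr.le]
        _ ≤ D * ((ρ * Real.cos θ)^(-s) * ‖z‖^(-a)) := by
          apply mul_le_mul_of_nonneg_left _ hD
          apply mul_le_mul_of_nonneg_left _ (Real.rpow_nonneg (by positivity) _)
          exact Real.rpow_le_rpow_of_exponent_le h1 (by linarith)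
        _ = D * (ρ * Real.cos θ)^(-s) * ‖z‖^(-a) := by ring
    have hb2 : ‖G c / (1+z)‖ ≤ M * ‖z‖^(-a) := by
      rw [norm_div]
      have h4 : ‖z‖ ≤ ‖1+z‖ := norm_le_norm_one_add hzre.le
      calc ‖G c‖ / ‖1+z‖ ≤ M / ‖z‖ := by
            apply div_le_div₀ hM (hGM c hcmem) hr h4
        _ = M * ‖z‖^(-(1:ℝ)) := by
            rw [Real.rpow_neg_one]; ring
        _ ≤ M * ‖z‖^(-a) := by
          apply mul_le_mul_of_nonneg_left _ hM
          exact Real.rpow_le_rpow_of_exponent_le h1 (by linarith)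
    calc ‖G w - G c / (1+z)‖ ≤ ‖G w‖ + ‖G c/(1+z)‖ := norm_sub_le _ _
      _ ≤ (D * (ρ * Real.cos θ)^(-s) + M) * ‖z‖^(-a) := by rw [add_mul]; exact add_le_add hb1 hb2
      _ ≤ _ := by
        rw [hmin]
        apply mul_le_mul_of_nonneg_right _ (Real.rpow_nonneg hr.le _)
        have t1 : 0 ≤ (2*M+1)*ρ/δ := by positivity
        have t2 : 0 ≤ 2*M*(ρ/δ)^a := by positivity
        linarith
  · -- small |z|
    have hmin : min (‖z‖^a) (‖z‖^(-a)) = ‖z‖^a :=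
      min_eq_left (Real.rpow_le_rpow_of_exponent_ge hr h1.le (by linarith))
    have hra : ‖z‖ ≤ ‖z‖^a := by
      calc ‖z‖ = ‖z‖^(1:ℝ) := (Real.rpow_one _).symm
        _ ≤ ‖z‖^a := Real.rpow_le_rpow_of_exponent_ge hr h1.le ha1
    have hne : (1+z) ≠ 0 := one_add_ne_zero hzre.le
    have e : G w - G c/(1+z) = (G w - G c) + G c * z/(1+z) := by
      field_simp
      ring
    have hb2 : ‖G c * z/(1+z)‖ ≤ M * ‖z‖^a := by
      rw [norm_div, norm_mul]
      calc ‖G c‖ * ‖z‖ / ‖1+z‖ ≤ ‖G c‖ * ‖z‖ := div_le_self (by positivity) hone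
        _ ≤ M * ‖z‖^a := mul_le_mul (hGM c hcmem) hra hr.le hM
    have hb1 : ‖G w - G c‖ ≤ ((2*M+1)*ρ/δ + 2*M*(ρ/δ)^a) * ‖z‖^a := by
      rcases lt_or_ge (ρ * ‖z‖) δ with hsm | hsm
      · -- Schwarz
        have hball : ball c δ ⊆ Sector θ := ball_subset_sector ⟨hθ0, hθ2⟩ ⟨hρ0, hρ1⟩
        have hd' : DifferentiableOn ℂ G (ball c δ) := hGd.mono hball
        have hmaps : MapsTo G (ball c δ) (ball (G c) (2*M+1)) := by
          intro x hx
          rw [mem_ball, dist_eq_norm]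
          calc ‖G x - G c‖ ≤ ‖G x‖ + ‖G c‖ := norm_sub_le _ _
            _ ≤ M + M := add_le_add (hGM x (hball hx)) (hGM c hcmem)
            _ < 2*M+1 := by linarith
        have hwball : w ∈ ball c δ := by
          rw [mem_ball, dist_eq_norm]
          have : w - c = (ρ:ℂ) * z := by rw [hwdef, hcdef]; ring
          rw [this, norm_mul]
          simpa [abs_of_pos hρ0, Complex.norm_real] using hsm
        have := Complex.dist_le_div_mul_dist_of_mapsTo_ball hd' (hmaps.mono_right ball_subset_closedBall) hwball
        rw [dist_eq_norm, dist_eq_norm] at this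
        have hwc : ‖w - c‖ = ρ * ‖z‖ := by
          have h5 : w - c = (ρ:ℂ) * z := by rw [hwdef, hcdef]; ring
          rw [h5, norm_mul, Complex.norm_real, Real.norm_eq_abs, abs_of_pos hρ0]
        calc ‖G w - G c‖ ≤ (2*M+1)/δ * ‖w - c‖ := this
          _ = (2*M+1)*ρ/δ * ‖z‖ := by rw [hwc]; ring
          _ ≤ (2*M+1)*ρ/δ * ‖z‖^a := by
            apply mul_le_mul_of_nonneg_left hra (by positivity)
          _ ≤ ((2*M+1)*ρ/δ + 2*M*(ρ/δ)^a) * ‖z‖^a := by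
            apply mul_le_mul_of_nonneg_right _ (Real.rpow_nonneg hr.le _)
            have : 0 ≤ 2*M*(ρ/δ)^a := by positivity
            linarith
      · -- crude
        have hcr : (1:ℝ) ≤ (ρ/δ * ‖z‖)^a := by
          apply Real.one_le_rpow _ ha0.le
          rw [div_mul_eq_mul_div, le_div_iff₀ hδ]
          linarith
        have hsplit : (ρ/δ * ‖z‖)^a = (ρ/δ)^a * ‖z‖^a := Real.mul_rpow (by positivity) hr.le
        calc ‖G w - G c‖ ≤ ‖G w‖ + ‖G c‖ := norm_sub_le _ _
          _ ≤ M + M := add_le_add (hGM w hw) (hGM c hcmem)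
          _ = 2*M * 1 := by ring
          _ ≤ 2*M * ((ρ/δ)^a * ‖z‖^a) := by
            apply mul_le_mul_of_nonneg_left _ (by positivity)
            rw [← hsplit]; exact hcr
          _ = 2*M*(ρ/δ)^a * ‖z‖^a := by ring
          _ ≤ ((2*M+1)*ρ/δ + 2*M*(ρ/δ)^a) * ‖z‖^a := by
            apply mul_le_mul_of_nonneg_right _ (Real.rpow_nonneg hr.le _)
            have : 0 ≤ (2*M+1)*ρ/δ := by positivity
            linarith
    rw [hmin]
    calc ‖G w - G c/(1+z)‖ ≤ ‖G w - G c‖ + ‖G c * z/(1+z)‖ := by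
          rw [e]; exact norm_add_le _ _
      _ ≤ ((2*M+1)*ρ/δ + 2*M*(ρ/δ)^a) * ‖z‖^a + M * ‖z‖^a := add_le_add hb1 hb2
      _ ≤ _ := by
        rw [← add_mul]
        apply mul_le_mul_of_nonneg_right _ (Real.rpow_nonneg hr.le _)
        have t1 : 0 ≤ D * (ρ * Real.cos θ)^(-s) := by positivity
        linarith


/-- the two-variable regularisation
`h̃(z₁,z₂) = h(φ_ρ z₁, φ_ρ z₂) − h(φ_ρ z₁, 1-ρ)/(1+z₂) − h(1-ρ, φ_ρ z₂)/(1+z₁)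
 + h(1-ρ,1-ρ)/((1+z₁)(1+z₂))` of a function `h ∈ H^∞₀(Σ_{θ₁} × Σ_{θ₂})`
again lies in `H^∞₀(Σ_{θ₁} × Σ_{θ₂})`. -/
theorem stmt_7 (θ₁ θ₂ : ℝ) (hθ₁ : θ₁ ∈ Set.Ioo 0 (Real.pi / 2))
    (hθ₂ : θ₂ ∈ Set.Ioo 0 (Real.pi / 2))
    (h : ℂ → ℂ → ℂ)
    (hhol : DifferentiableOn ℂ (fun q : ℂ × ℂ => h q.1 q.2) (Sector θ₁ ×ˢ Sector θ₂))
    (C s₁ s₂ : ℝ) (hC : 0 < C) (hs₁ : 0 < s₁) (hs₂ : 0 < s₂)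
    (hdecay : ∀ z₁ ∈ Sector θ₁, ∀ z₂ ∈ Sector θ₂,
      ‖h z₁ z₂‖ ≤ C * (‖z₁‖ ^ s₁ / (1 + ‖z₁‖ ^ (2 * s₁))) *
        (‖z₂‖ ^ s₂ / (1 + ‖z₂‖ ^ (2 * s₂))))
    (ρ : ℝ) (hρ : ρ ∈ Set.Ioo (0 : ℝ) 1)
    (φ : ℂ → ℂ) (hφ : ∀ z, φ z = ((1 - ρ : ℝ) : ℂ) + (ρ : ℂ) * z)
    (htil : ℂ → ℂ → ℂ)
    (hdef : ∀ z₁ z₂ : ℂ, htil z₁ z₂ =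
      h (φ z₁) (φ z₂) - h (φ z₁) ((1 - ρ : ℝ) : ℂ) / (1 + z₂)
        - h ((1 - ρ : ℝ) : ℂ) (φ z₂) / (1 + z₁)
        + h ((1 - ρ : ℝ) : ℂ) ((1 - ρ : ℝ) : ℂ) / ((1 + z₁) * (1 + z₂))) :
    DifferentiableOn ℂ (fun q : ℂ × ℂ => htil q.1 q.2) (Sector θ₁ ×ˢ Sector θ₂) ∧
    ∃ C' s₁' s₂' : ℝ, 0 < C' ∧ 0 < s₁' ∧ 0 < s₂' ∧
      ∀ z₁ ∈ Sector θ₁, ∀ z₂ ∈ Sector θ₂,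
        ‖htil z₁ z₂‖ ≤ C' * (‖z₁‖ ^ s₁' / (1 + ‖z₁‖ ^ (2 * s₁'))) *
          (‖z₂‖ ^ s₂' / (1 + ‖z₂‖ ^ (2 * s₂'))) := by
  obtain ⟨hρ0, hρ1⟩ := hρ
  have h1ρ : 0 < 1 - ρ := by linarith
  have hφd : Differentiable ℂ φ := by
    have : φ = fun z => ((1 - ρ : ℝ) : ℂ) + (ρ : ℂ) * z := funext hφ
    rw [this]
    exact (differentiable_const _).add ((differentiable_const _).mul differentiable_id)
  have hφS₁ : ∀ z ∈ Sector θ₁, φ z ∈ Sector θ₁ := fun z hz => by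
    rw [hφ]; exact sector_affine_mem hθ₁ h1ρ hρ0 hz
  have hφS₂ : ∀ z ∈ Sector θ₂, φ z ∈ Sector θ₂ := fun z hz => by
    rw [hφ]; exact sector_affine_mem hθ₂ h1ρ hρ0 hz
  have hc₁ : ((1 - ρ : ℝ) : ℂ) ∈ Sector θ₁ := real_mem_sector hθ₁ h1ρ
  have hc₂ : ((1 - ρ : ℝ) : ℂ) ∈ Sector θ₂ := real_mem_sector hθ₂ h1ρ
  have hne₁ : ∀ z ∈ Sector θ₁, (1 + z) ≠ 0 := fun z hz =>
    one_add_ne_zero (sector_re_pos hθ₁ hz).le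
  have hne₂ : ∀ z ∈ Sector θ₂, (1 + z) ≠ 0 := fun z hz =>
    one_add_ne_zero (sector_re_pos hθ₂ hz).le
  constructor
  · -- differentiability
    have heq : (fun q : ℂ × ℂ => htil q.1 q.2) = fun q : ℂ × ℂ =>
        h (φ q.1) (φ q.2) - h (φ q.1) ((1 - ρ : ℝ) : ℂ) / (1 + q.2)
        - h ((1 - ρ : ℝ) : ℂ) (φ q.2) / (1 + q.1)
        + h ((1 - ρ : ℝ) : ℂ) ((1 - ρ : ℝ) : ℂ) / ((1 + q.1) * (1 + q.2)) :=
      funext fun q => hdef q.1 q.2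
    rw [heq]
    have d1 : DifferentiableOn ℂ (fun q : ℂ × ℂ => h (φ q.1) (φ q.2))
        (Sector θ₁ ×ˢ Sector θ₂) :=
      hhol.comp (((hφd.comp differentiable_fst).prodMk (hφd.comp differentiable_snd)).differentiableOn)
        (fun q hq => ⟨hφS₁ _ hq.1, hφS₂ _ hq.2⟩)
    have d2 : DifferentiableOn ℂ (fun q : ℂ × ℂ => h (φ q.1) ((1 - ρ : ℝ) : ℂ))
        (Sector θ₁ ×ˢ Sector θ₂) :=
      hhol.comp (((hφd.comp differentiable_fst).prodMk (differentiable_const _)).differentiableOn)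
        (fun q hq => ⟨hφS₁ _ hq.1, hc₂⟩)
    have d3 : DifferentiableOn ℂ (fun q : ℂ × ℂ => h ((1 - ρ : ℝ) : ℂ) (φ q.2))
        (Sector θ₁ ×ˢ Sector θ₂) :=
      hhol.comp (((differentiable_const _).prodMk (hφd.comp differentiable_snd)).differentiableOn)
        (fun q hq => ⟨hc₁, hφS₂ _ hq.2⟩)
    have den₁ : DifferentiableOn ℂ (fun q : ℂ × ℂ => 1 + q.1) (Sector θ₁ ×ˢ Sector θ₂) :=
      ((differentiable_const _).add differentiable_fst).differentiableOn
    have den₂ : DifferentiableOn ℂ (fun q : ℂ × ℂ => 1 + q.2) (Sector θ₁ ×ˢ Sector θ₂) :=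
      ((differentiable_const _).add differentiable_snd).differentiableOn
    have hq₁ne : ∀ q ∈ Sector θ₁ ×ˢ Sector θ₂, (1 + (q : ℂ × ℂ).1) ≠ 0 :=
      fun q hq => hne₁ _ hq.1
    have hq₂ne : ∀ q ∈ Sector θ₁ ×ˢ Sector θ₂, (1 + (q : ℂ × ℂ).2) ≠ 0 :=
      fun q hq => hne₂ _ hq.2
    simp only [div_eq_mul_inv]
    exact ((d1.sub (d2.mul (den₂.inv hq₂ne))).sub (d3.mul (den₁.inv hq₁ne))).add
      (((differentiable_const _ : Differentiable ℂ (fun _ : ℂ × ℂ =>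
          h ((1 - ρ : ℝ) : ℂ) ((1 - ρ : ℝ) : ℂ))).differentiableOn).mul
        ((den₁.mul den₂).inv (fun q hq => mul_ne_zero (hq₁ne q hq) (hq₂ne q hq))))
  · -- decay bound
    obtain ⟨K₁, hK₁pos, hK₁⟩ := key_est θ₁ hθ₁ ρ ⟨hρ0, hρ1⟩ (C/2) C s₁ (by positivity) hC.le hs₁
    obtain ⟨K₂, hK₂pos, hK₂⟩ := key_est θ₂ hθ₂ ρ ⟨hρ0, hρ1⟩ (C/2) C s₂ (by positivity) hC.le hs₂
    refine ⟨4 * Real.sqrt (K₁ * K₂), min s₁ 1 / 2, min s₂ 1 / 2,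
      by positivity, by positivity, by positivity, ?_⟩
    intro z₁ hz₁ z₂ hz₂
    have hr₁ : 0 < ‖z₁‖ := sector_norm_pos hz₁
    have hr₂ : 0 < ‖z₂‖ := sector_norm_pos hz₂
    have hnez₁ : (1 + z₁) ≠ 0 := hne₁ _ hz₁
    have hnez₂ : (1 + z₂) ≠ 0 := hne₂ _ hz₂
    have honez₁ : 1 ≤ ‖1 + z₁‖ := one_le_norm_one_add (sector_re_pos hθ₁ hz₁).le
    have honez₂ : 1 ≤ ‖1 + z₂‖ := one_le_norm_one_add (sector_re_pos hθ₂ hz₂).le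
    -- basic bounds on h
    have hMh : ∀ w ∈ Sector θ₁, ∀ u ∈ Sector θ₂, ‖h w u‖ ≤ C/4 := by
      intro w hw u hu
      calc ‖h w u‖ ≤ C * (‖w‖ ^ s₁ / (1 + ‖w‖ ^ (2 * s₁))) *
            (‖u‖ ^ s₂ / (1 + ‖u‖ ^ (2 * s₂))) := hdecay w hw u hu
        _ ≤ C * (1/2) * (1/2) := by
          have g1 := g_le_half (sector_norm_pos hw) hs₁
          have g2 := g_le_half (sector_norm_pos hu) hs₂
          have p1 : (0:ℝ) ≤ ‖w‖ ^ s₁ / (1 + ‖w‖ ^ (2 * s₁)) := by positivity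
          have p2 : (0:ℝ) ≤ ‖u‖ ^ s₂ / (1 + ‖u‖ ^ (2 * s₂)) := by positivity
          exact mul_le_mul (mul_le_mul le_rfl g1 p1 hC.le) g2 p2 (by positivity)
        _ = C/4 := by ring
    have hD1h : ∀ w ∈ Sector θ₁, ∀ u ∈ Sector θ₂, ‖h w u‖ ≤ C/2 * ‖w‖ ^ (-s₁) := by
      intro w hw u hu
      calc ‖h w u‖ ≤ C * (‖w‖ ^ s₁ / (1 + ‖w‖ ^ (2 * s₁))) *
            (‖u‖ ^ s₂ / (1 + ‖u‖ ^ (2 * s₂))) := hdecay w hw u hu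
        _ ≤ C * (‖w‖ ^ (-s₁)) * (1/2) := by
          have g1 := g_le_inv (sector_norm_pos hw) hs₁
          have g2 := g_le_half (sector_norm_pos hu) hs₂
          have p1 : (0:ℝ) ≤ ‖w‖ ^ s₁ / (1 + ‖w‖ ^ (2 * s₁)) := by positivity
          have p2 : (0:ℝ) ≤ ‖u‖ ^ s₂ / (1 + ‖u‖ ^ (2 * s₂)) := by positivity
          exact mul_le_mul (mul_le_mul le_rfl g1 p1 hC.le) g2 p2 (by positivity)
        _ = C/2 * ‖w‖ ^ (-s₁) := by ring
    have hD2h : ∀ w ∈ Sector θ₁, ∀ u ∈ Sector θ₂, ‖h w u‖ ≤ C/2 * ‖u‖ ^ (-s₂) := by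
      intro w hw u hu
      calc ‖h w u‖ ≤ C * (‖w‖ ^ s₁ / (1 + ‖w‖ ^ (2 * s₁))) *
            (‖u‖ ^ s₂ / (1 + ‖u‖ ^ (2 * s₂))) := hdecay w hw u hu
        _ ≤ C * (1/2) * (‖u‖ ^ (-s₂)) := by
          have g1 := g_le_half (sector_norm_pos hw) hs₁
          have g2 := g_le_inv (sector_norm_pos hu) hs₂
          have p1 : (0:ℝ) ≤ ‖w‖ ^ s₁ / (1 + ‖w‖ ^ (2 * s₁)) := by positivity
          have p2 : (0:ℝ) ≤ ‖u‖ ^ s₂ / (1 + ‖u‖ ^ (2 * s₂)) := by positivity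
          exact mul_le_mul (mul_le_mul le_rfl g1 p1 hC.le) g2 p2 (by positivity)
        _ = C/2 * ‖u‖ ^ (-s₂) := by ring
    -- bound in the first variable
    have B1 : ‖htil z₁ z₂‖ ≤ K₁ * min (‖z₁‖ ^ min s₁ 1) (‖z₁‖ ^ (-min s₁ 1)) := by
      have happ := hK₁ (fun w => h w (φ z₂) - h w ((1 - ρ : ℝ) : ℂ) / (1 + z₂))
        ?_ ?_ ?_ z₁ hz₁
      · have hid : htil z₁ z₂ =
            (fun w => h w (φ z₂) - h w ((1 - ρ : ℝ) : ℂ) / (1 + z₂))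
              (((1-ρ:ℝ):ℂ) + (ρ:ℂ)*z₁) -
            (fun w => h w (φ z₂) - h w ((1 - ρ : ℝ) : ℂ) / (1 + z₂)) ((1-ρ:ℝ):ℂ) / (1+z₁) := by
          simp only
          rw [hdef z₁ z₂, hφ z₁]
          field_simp
          ring
        rw [hid]
        exact happ
      · -- differentiability of G₁
        apply DifferentiableOn.sub
        · exact hhol.comp ((differentiable_id.prodMk (differentiable_const _)).differentiableOn)
            (fun w hw => ⟨hw, hφS₂ _ hz₂⟩)
        · exact (hhol.comp ((differentiable_id.prodMk (differentiable_const _)).differentiableOn)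
            (fun w hw => ⟨hw, hc₂⟩)).div_const _
      · -- M bound
        intro w hw
        calc ‖h w (φ z₂) - h w ((1 - ρ : ℝ) : ℂ) / (1 + z₂)‖
            ≤ ‖h w (φ z₂)‖ + ‖h w ((1 - ρ : ℝ) : ℂ)‖ / ‖1 + z₂‖ := by
              rw [← norm_div]; exact norm_sub_le _ _
          _ ≤ C/4 + C/4 := by
              apply add_le_add (hMh w hw _ (hφS₂ _ hz₂))
              calc ‖h w ((1 - ρ : ℝ) : ℂ)‖ / ‖1 + z₂‖ ≤ ‖h w ((1 - ρ : ℝ) : ℂ)‖ :=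
                    div_le_self (norm_nonneg _) honez₂
                _ ≤ C/4 := hMh w hw _ hc₂
          _ = C/2 := by ring
      · -- D bound
        intro w hw
        calc ‖h w (φ z₂) - h w ((1 - ρ : ℝ) : ℂ) / (1 + z₂)‖
            ≤ ‖h w (φ z₂)‖ + ‖h w ((1 - ρ : ℝ) : ℂ)‖ / ‖1 + z₂‖ := by
              rw [← norm_div]; exact norm_sub_le _ _
          _ ≤ C/2 * ‖w‖ ^ (-s₁) + C/2 * ‖w‖ ^ (-s₁) := by
              apply add_le_add (hD1h w hw _ (hφS₂ _ hz₂))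
              calc ‖h w ((1 - ρ : ℝ) : ℂ)‖ / ‖1 + z₂‖ ≤ ‖h w ((1 - ρ : ℝ) : ℂ)‖ :=
                    div_le_self (norm_nonneg _) honez₂
                _ ≤ C/2 * ‖w‖ ^ (-s₁) := hD1h w hw _ hc₂
          _ = C * ‖w‖ ^ (-s₁) := by ring
    -- bound in the second variable
    have B2 : ‖htil z₁ z₂‖ ≤ K₂ * min (‖z₂‖ ^ min s₂ 1) (‖z₂‖ ^ (-min s₂ 1)) := by
      have happ := hK₂ (fun u => h (φ z₁) u - h ((1 - ρ : ℝ) : ℂ) u / (1 + z₁))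
        ?_ ?_ ?_ z₂ hz₂
      · have hid : htil z₁ z₂ =
            (fun u => h (φ z₁) u - h ((1 - ρ : ℝ) : ℂ) u / (1 + z₁))
              (((1-ρ:ℝ):ℂ) + (ρ:ℂ)*z₂) -
            (fun u => h (φ z₁) u - h ((1 - ρ : ℝ) : ℂ) u / (1 + z₁)) ((1-ρ:ℝ):ℂ) / (1+z₂) := by
          simp only
          rw [hdef z₁ z₂, hφ z₂]
          field_simp
          ring
        rw [hid]
        exact happ
      · apply DifferentiableOn.sub
        · exact hhol.comp (((differentiable_const _).prodMk differentiable_id).differentiableOn)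
            (fun u hu => ⟨hφS₁ _ hz₁, hu⟩)
        · exact (hhol.comp (((differentiable_const _).prodMk differentiable_id).differentiableOn)
            (fun u hu => ⟨hc₁, hu⟩)).div_const _
      · intro u hu
        calc ‖h (φ z₁) u - h ((1 - ρ : ℝ) : ℂ) u / (1 + z₁)‖
            ≤ ‖h (φ z₁) u‖ + ‖h ((1 - ρ : ℝ) : ℂ) u‖ / ‖1 + z₁‖ := by
              rw [← norm_div]; exact norm_sub_le _ _
          _ ≤ C/4 + C/4 := by
              apply add_le_add (hMh _ (hφS₁ _ hz₁) u hu)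
              calc ‖h ((1 - ρ : ℝ) : ℂ) u‖ / ‖1 + z₁‖ ≤ ‖h ((1 - ρ : ℝ) : ℂ) u‖ :=
                    div_le_self (norm_nonneg _) honez₁
                _ ≤ C/4 := hMh _ hc₁ u hu
          _ = C/2 := by ring
      · intro u hu
        calc ‖h (φ z₁) u - h ((1 - ρ : ℝ) : ℂ) u / (1 + z₁)‖
            ≤ ‖h (φ z₁) u‖ + ‖h ((1 - ρ : ℝ) : ℂ) u‖ / ‖1 + z₁‖ := by
              rw [← norm_div]; exact norm_sub_le _ _
          _ ≤ C/2 * ‖u‖ ^ (-s₂) + C/2 * ‖u‖ ^ (-s₂) := by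
              apply add_le_add (hD2h _ (hφS₁ _ hz₁) u hu)
              calc ‖h ((1 - ρ : ℝ) : ℂ) u‖ / ‖1 + z₁‖ ≤ ‖h ((1 - ρ : ℝ) : ℂ) u‖ :=
                    div_le_self (norm_nonneg _) honez₁
                _ ≤ C/2 * ‖u‖ ^ (-s₂) := hD2h _ hc₁ u hu
          _ = C * ‖u‖ ^ (-s₂) := by ring
    -- combine
    set m₁ := min (‖z₁‖ ^ min s₁ 1) (‖z₁‖ ^ (-min s₁ 1)) with hm₁def
    set m₂ := min (‖z₂‖ ^ min s₂ 1) (‖z₂‖ ^ (-min s₂ 1)) with hm₂def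
    have hm₁0 : 0 ≤ m₁ := le_min (Real.rpow_nonneg hr₁.le _) (Real.rpow_nonneg hr₁.le _)
    have hm₂0 : 0 ≤ m₂ := le_min (Real.rpow_nonneg hr₂.le _) (Real.rpow_nonneg hr₂.le _)
    have hGMean := geom_mean (norm_nonneg (htil z₁ z₂)) hK₁pos.le hm₁0 hK₂pos.le hm₂0 B1 B2
    have e₁ : Real.sqrt m₁ = min (‖z₁‖ ^ (min s₁ 1 / 2)) (‖z₁‖ ^ (-(min s₁ 1 / 2))) := by
      rw [hm₁def, sqrt_min_rpow hr₁]
    have e₂ : Real.sqrt m₂ = min (‖z₂‖ ^ (min s₂ 1 / 2)) (‖z₂‖ ^ (-(min s₂ 1 / 2))) := by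
      rw [hm₂def, sqrt_min_rpow hr₂]
    have hmin₁ : (0:ℝ) < min s₁ 1 / 2 := by positivity
    have hmin₂ : (0:ℝ) < min s₂ 1 / 2 := by positivity
    have t₁ : Real.sqrt m₁ ≤
        2 * (‖z₁‖ ^ (min s₁ 1 / 2) / (1 + ‖z₁‖ ^ (2 * (min s₁ 1 / 2)))) := by
      rw [e₁]; exact min_rpow_le hr₁ hmin₁
    have t₂ : Real.sqrt m₂ ≤
        2 * (‖z₂‖ ^ (min s₂ 1 / 2) / (1 + ‖z₂‖ ^ (2 * (min s₂ 1 / 2)))) := by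
      rw [e₂]; exact min_rpow_le hr₂ hmin₂
    calc ‖htil z₁ z₂‖
        ≤ (Real.sqrt K₁ * Real.sqrt m₁) * (Real.sqrt K₂ * Real.sqrt m₂) := hGMean
      _ ≤ (Real.sqrt K₁ * (2 * (‖z₁‖ ^ (min s₁ 1 / 2) / (1 + ‖z₁‖ ^ (2 * (min s₁ 1 / 2)))))) *
          (Real.sqrt K₂ * (2 * (‖z₂‖ ^ (min s₂ 1 / 2) / (1 + ‖z₂‖ ^ (2 * (min s₂ 1 / 2)))))) := by
          apply mul_le_mul (mul_le_mul_of_nonneg_left t₁ (Real.sqrt_nonneg _))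
            (mul_le_mul_of_nonneg_left t₂ (Real.sqrt_nonneg _))
            (by positivity) (by positivity)
      _ = 4 * Real.sqrt (K₁ * K₂) * (‖z₁‖ ^ (min s₁ 1 / 2) / (1 + ‖z₁‖ ^ (2 * (min s₁ 1 / 2)))) *
          (‖z₂‖ ^ (min s₂ 1 / 2) / (1 + ‖z₂‖ ^ (2 * (min s₂ 1 / 2)))) := by
          rw [Real.sqrt_mul hK₁pos.le]; ring
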